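/- Let R be a ℤ^n-graded ring with support in a pointed cone C and R_0 its degree-zero subring, R_+ = ⊕_{a>0} R_a, so R_0 ≅ R/R_+. For every finitely generated graded projective R-module P, the quotient T(P) = P/PR_+ is a finitely generated projective graded R_0-module, and the canonical short exact sequence 0 → PR_+ → P → T(P) → 0 of graded R_0-modules admits a degree-preserving R_0-linear splitting σ : T(P) → P. -/

import Mathlib

open scoped DirectSum


/-- A `ℤⁿ`-graded `R`-module `(P, 𝒬)` is *finitely generated graded projective* if it
is a degree-preserving direct summand of a finite direct sum of shifted copies
`R(-bᵢ)` of `R` (where `R(-b)_a = R_{a-b}`). -/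
def IsFGGradedProjective {n : ℕ} {R : Type*} [Ring R] (𝒜 : (Fin n → ℤ) → AddSubgroup R)
    {P : Type*} [AddCommGroup P] [Module R P] (𝒬 : (Fin n → ℤ) → AddSubgroup P) : Prop :=
  ∃ (m : ℕ) (b : Fin m → (Fin n → ℤ)) (s : P →ₗ[R] (Fin m → R)) (p : (Fin m → R) →ₗ[R] P),
    p.comp s = LinearMap.id ∧
    (∀ (a : Fin n → ℤ) (x : P), x ∈ 𝒬 a → ∀ i, s x i ∈ 𝒜 (a - b i)) ∧
    (∀ (a : Fin n → ℤ) (y : Fin m → R), (∀ i, y i ∈ 𝒜 (a - b i)) → p y ∈ 𝒬 a)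

/-- The degree-zero part `R₀ = 𝒜 0` of a graded ring acts on any `R`-module. -/
def gradeZeroModule {n : ℕ} {R : Type*} [Ring R] (𝒜 : (Fin n → ℤ) → AddSubgroup R)
    [GradedRing 𝒜] (M : Type*) [AddCommGroup M] [Module R M] : Module ↥(𝒜 0) M :=
  Module.compHom M
    ({ toFun := fun r => (r : R), map_one' := rfl, map_mul' := fun _ _ => rfl,
       map_zero' := rfl, map_add' := fun _ _ => rfl } : ↥(𝒜 0) →+* R)

/-- Auxiliary: transfer of internal direct sum decompositions along a surjection
admitting a degree-preserving additive section. -/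
lemma isInternal_map_of_section {ι : Type*} [DecidableEq ι]
    {M M' : Type*} [AddCommGroup M] [AddCommGroup M']
    (A : ι → AddSubgroup M) (f : M →+ M') (g : M' →+ M)
    (hA : DirectSum.IsInternal A)
    (hf : Function.Surjective f)
    (hfg : ∀ y, f (g y) = y)
    (hgA : ∀ i x, x ∈ A i → g (f x) ∈ A i) :
    DirectSum.IsInternal fun i => (A i).map f := by
  classical
  have hmem : ∀ (i) (u : M'), u ∈ (A i).map f → g u ∈ A i := by
    rintro i u ⟨x, hx, rfl⟩; exact hgA i x hx
  set l : ∀ i, ↥((A i).map f) →+ ↥(A i) := fun i =>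
    AddMonoidHom.mk' (fun u => ⟨g ↑u, hmem i ↑u u.2⟩)
      (fun u v => Subtype.ext (by
        show g ↑(u + v) = g ↑u + g ↑v
        rw [AddSubgroup.coe_add, map_add])) with hl
  set Φ : (⨁ i, ↥((A i).map f)) →+ ⨁ i, ↥(A i) :=
    DirectSum.toAddMonoid (fun i => (DirectSum.of (fun j => ↥(A j)) i).comp (l i)) with hΦ
  have hΦof : ∀ (i) (u : ↥((A i).map f)),
      Φ (DirectSum.of _ i u) = DirectSum.of _ i (l i u) := by
    intro i u
    rw [hΦ, DirectSum.toAddMonoid_of]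
    rfl
  have hcomm : ∀ z, DirectSum.coeAddMonoidHom A (Φ z) =
      g (DirectSum.coeAddMonoidHom (fun i => (A i).map f) z) := by
    intro z
    induction z using DirectSum.induction_on with
    | zero => simp
    | of i u =>
        rw [hΦof, DirectSum.coeAddMonoidHom_of, DirectSum.coeAddMonoidHom_of]
        rfl
    | add x y hx hy => rw [map_add, map_add, map_add, map_add, hx, hy]
  have hΦapply : ∀ z j, Φ z j = l j (z j) := by
    intro z j
    induction z using DirectSum.induction_on with
    | zero => simp
    | of i u =>
        rw [hΦof]
        by_cases h : i = j
        · subst h; rw [DirectSum.of_eq_same, DirectSum.of_eq_same]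
        · rw [DirectSum.of_eq_of_ne _ _ _ (Ne.symm h), DirectSum.of_eq_of_ne _ _ _ (Ne.symm h), map_zero]
    | add x y hx hy =>
        rw [map_add, DirectSum.add_apply, DirectSum.add_apply, map_add, hx, hy]
  constructor
  · rw [injective_iff_map_eq_zero]
    intro z hz
    have h1 : Φ z = 0 := hA.injective (by rw [hcomm, hz, map_zero, map_zero])
    refine DFinsupp.ext fun j => ?_
    have h2 : l j (z j) = 0 := by rw [← hΦapply, h1]; rfl
    have h3 : g ↑(z j) = 0 := congrArg Subtype.val h2
    refine Subtype.ext ?_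
    have := hfg ↑(z j)
    rw [h3, map_zero] at this
    exact this.symm
  · intro y
    obtain ⟨x, rfl⟩ := hf y
    obtain ⟨w, rfl⟩ := hA.surjective x
    set u : ∀ i, ↥(A i) →+ ↥((A i).map f) := fun i =>
      AddMonoidHom.mk' (fun x => ⟨f ↑x, ⟨↑x, x.2, rfl⟩⟩)
        (fun a b => Subtype.ext (by
          show f ↑(a + b) = f ↑a + f ↑b
          rw [AddSubgroup.coe_add, map_add])) with hu
    set Ψ : (⨁ i, ↥(A i)) →+ ⨁ i, ↥((A i).map f) :=
      DirectSum.toAddMonoid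
        (fun i => (DirectSum.of (fun j => ↥((A j).map f)) i).comp (u i)) with hΨ
    have hΨof : ∀ (i) (x : ↥(A i)),
        Ψ (DirectSum.of _ i x) = DirectSum.of _ i (u i x) := by
      intro i x
      rw [hΨ, DirectSum.toAddMonoid_of]
      rfl
    refine ⟨Ψ w, ?_⟩
    induction w using DirectSum.induction_on with
    | zero => simp
    | of i x =>
        rw [hΨof, DirectSum.coeAddMonoidHom_of, DirectSum.coeAddMonoidHom_of]
        rfl
    | add x y hx hy => rw [map_add, map_add, map_add, hx, hy, map_add]


/-- Let `R` be a `ℤⁿ`-graded ring with support in a pointed cone `C`,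
`R₀` its degree-zero subring and `R₊ = ⊕_{a>0} R_a`.  For every finitely generated
graded projective `R`-module `P`, the quotient `T(P) = P/PR₊` is a finitely
generated projective graded `R₀`-module, and the canonical short exact sequence
`0 → PR₊ → P → T(P) → 0` of graded `R₀`-modules admits a degree-preserving
`R₀`-linear splitting `σ : T(P) → P`. -/
theorem TP_fg_projective_and_split (n ℓ : ℕ)
    (vgen : Fin ℓ → (Fin n → ℝ)) (C : Set (Fin n → ℝ))
    (hC : C = {x | ∃ c : Fin ℓ → ℝ, (∀ i, 0 ≤ c i) ∧ x = ∑ i, c i • vgen i})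
    (γ : (Fin n → ℝ) →ₗ[ℝ] ℝ)
    (hnonneg : ∀ x ∈ C, 0 ≤ γ x)
    (hpointed : ∀ x ∈ C, γ x = 0 → x = 0)
    (ι : (Fin n → ℤ) → (Fin n → ℝ)) (hι : ι = fun a i => (a i : ℝ))
    (hinj : Function.Injective (γ ∘ ι))
    -- the graded ring `R` with support in `C`
    (R : Type*) [Ring R] (𝒜 : (Fin n → ℤ) → AddSubgroup R) [GradedRing 𝒜]
    (hsupp : ∀ a, 𝒜 a ≠ ⊥ → ι a ∈ C)
    (Rplus : Ideal R)
    (hRplus : Rplus = Ideal.span (⋃ a ∈ {a : Fin n → ℤ | 0 < γ (ι a)}, (𝒜 a : Set R)))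
    -- a finitely generated graded projective `R`-module `P`
    (P : Type*) [AddCommGroup P] [Module R P]
    (𝒬 : (Fin n → ℤ) → AddSubgroup P)
    (hPinternal : DirectSum.IsInternal 𝒬)
    (hPsmul : ∀ (a b : Fin n → ℤ) (r : R) (x : P), r ∈ 𝒜 a → x ∈ 𝒬 b → r • x ∈ 𝒬 (a + b))
    (hPproj : IsFGGradedProjective 𝒜 𝒬)
    -- `T(P) = P/PR₊`, with its induced grading
    (π : P →ₗ[R] (P ⧸ (Rplus • (⊤ : Submodule R P))))
    (hπ : π = (Rplus • (⊤ : Submodule R P)).mkQ) :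
    -- `T(P)` is a graded `R₀`-module (the images of the `𝒬 a` decompose it), …
    (DirectSum.IsInternal fun a : Fin n → ℤ =>
      (𝒬 a).map π.toAddMonoidHom) ∧
    -- … finitely generated and projective over `R₀ = 𝒜 0`, …
    (letI := gradeZeroModule 𝒜 (P ⧸ (Rplus • (⊤ : Submodule R P)));
      Module.Finite ↥(𝒜 0) (P ⧸ (Rplus • (⊤ : Submodule R P))) ∧
      Module.Projective ↥(𝒜 0) (P ⧸ (Rplus • (⊤ : Submodule R P)))) ∧
    -- … and `π` admits a degree-preserving `R₀`-linear splitting `σ`.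
    (∃ σ : (P ⧸ (Rplus • (⊤ : Submodule R P))) →+ P,
      (∀ t, π (σ t) = t) ∧
      (∀ r ∈ 𝒜 0, ∀ t, σ (r • t) = r • σ t) ∧
      (∀ (a : Fin n → ℤ) (x : P), x ∈ 𝒬 a → σ (π x) ∈ 𝒬 a)) := by
  classical
  -- weight facts
  have hι_add : ∀ a b : Fin n → ℤ, ι (a + b) = ι a + ι b := by
    subst hι; intro a b; funext i; push_cast; simp [Pi.add_apply]
  have hι0 : ι 0 = 0 := by subst hι; funext i; simp
  have hw0 : γ (ι 0) = 0 := by rw [hι0]; exact map_zero γ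
  have hwpos : ∀ c : Fin n → ℤ, c ≠ 0 → 𝒜 c ≠ ⊥ → 0 < γ (ι c) := by
    intro c hc hbot
    rcases (hnonneg _ (hsupp c hbot)).lt_or_eq with h | h
    · exact h
    · exact absurd (hinj (show γ (ι c) = γ (ι 0) by rw [hw0, ← h])) hc
  have hbot_of_mem : ∀ {c : Fin n → ℤ} {x : R}, x ∈ 𝒜 c → x ≠ 0 → 𝒜 c ≠ ⊥ := by
    intro c x hx hx0 h
    rw [h] at hx
    exact hx0 (AddSubgroup.mem_bot.mp hx)
  have hmem_plus : ∀ (c : Fin n → ℤ), c ≠ 0 → ∀ x ∈ 𝒜 c, x ∈ Rplus := by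
    intro c hc x hx
    by_cases hx0 : x = 0
    · simp [hx0]
    rw [hRplus]
    exact Ideal.subset_span (Set.mem_biUnion (hwpos c hc (hbot_of_mem hx hx0)) hx)
  -- key multiplication lemmas in degree 0
  have keyA : ∀ (b c : Fin n → ℤ), ¬(b = 0 ∧ c = 0) → ∀ x ∈ 𝒜 b, ∀ y ∈ 𝒜 c,
      (DirectSum.decompose 𝒜 (x * y) 0 : R) = 0 := by
    intro b c hbc x hx y hy
    by_cases hx0 : x = 0
    · simp [hx0]
    by_cases hy0 : y = 0
    · simp [hy0]
    have hxy : x * y ∈ 𝒜 (b + c) := SetLike.mul_mem_graded hx hy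
    have hb : 0 ≤ γ (ι b) := hnonneg _ (hsupp b (hbot_of_mem hx hx0))
    have hc' : 0 ≤ γ (ι c) := hnonneg _ (hsupp c (hbot_of_mem hy hy0))
    have hne : b + c ≠ 0 := by
      intro h
      have h0 : γ (ι (b + c)) = 0 := by rw [h, hw0]
      rw [hι_add, map_add] at h0
      rcases not_and_or.mp hbc with hb0 | hc0
      · have := hwpos b hb0 (hbot_of_mem hx hx0); linarith
      · have := hwpos c hc0 (hbot_of_mem hy hy0); linarith
    rw [DirectSum.decompose_of_mem_ne 𝒜 hxy hne]
  have keyB : ∀ x y : R,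
      ((DirectSum.decompose 𝒜 x 0 : R) = 0 ∨ (DirectSum.decompose 𝒜 y 0 : R) = 0) →
      (DirectSum.decompose 𝒜 (x * y) 0 : R) = 0 := by
    intro x y h
    conv_lhs => rw [← DirectSum.sum_support_decompose 𝒜 x,
      ← DirectSum.sum_support_decompose 𝒜 y]
    rw [Finset.sum_mul_sum]
    rw [DirectSum.decompose_sum]
    rw [DFinsupp.finset_sum_apply, AddSubmonoidClass.coe_finset_sum]
    refine Finset.sum_eq_zero fun b hb => ?_
    rw [DirectSum.decompose_sum, DFinsupp.finset_sum_apply, AddSubmonoidClass.coe_finset_sum]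
    refine Finset.sum_eq_zero fun c hc => ?_
    refine keyA b c ?_ _ (SetLike.coe_mem _) _ (SetLike.coe_mem _)
    rintro ⟨rfl, rfl⟩
    rcases h with h | h
    · exact (DFinsupp.mem_support_iff.mp hb) (by ext; simpa using h)
    · exact (DFinsupp.mem_support_iff.mp hc) (by ext; simpa using h)
  have keyC : ∀ r ∈ 𝒜 0, ∀ y : R,
      (DirectSum.decompose 𝒜 (r * y) 0 : R) = r * (DirectSum.decompose 𝒜 y 0 : R) := by
    intro r hr y
    have := DirectSum.coe_decompose_mul_add_of_left_mem 𝒜 (b := y) (j := 0) hr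
    rw [show (0 : Fin n → ℤ) + 0 = 0 from add_zero 0] at this
    simpa using this
  have keyRplus : ∀ r ∈ Rplus, (DirectSum.decompose 𝒜 r 0 : R) = 0 := by
    intro r hr
    rw [hRplus] at hr
    refine Submodule.span_induction ?_ ?_ ?_ ?_ hr
    · rintro x hx
      simp only [Set.mem_iUnion] at hx
      obtain ⟨a, ha, hxa⟩ := hx
      have ha0 : a ≠ 0 := by
        rintro rfl
        simp only [Set.mem_setOf_eq, hw0] at ha
        exact lt_irrefl 0 ha
      exact DirectSum.decompose_of_mem_ne 𝒜 hxa ha0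
    · simp
    · intro x y _ _ hx hy
      rw [DirectSum.decompose_add]
      simp only [DirectSum.add_apply, AddSubgroup.coe_add, hx, hy, add_zero]
    · intro r x _ hx
      rw [smul_eq_mul]
      exact keyB r x (Or.inr hx)
  have key_sub : ∀ y : R, y - (DirectSum.decompose 𝒜 y 0 : R) ∈ Rplus := by
    intro y
    have hsum := DirectSum.sum_support_decompose 𝒜 y
    by_cases h0 : 0 ∈ (DirectSum.decompose 𝒜 y).support
    · have : y - (DirectSum.decompose 𝒜 y 0 : R) =
          ∑ c ∈ (DirectSum.decompose 𝒜 y).support.erase 0,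
            (DirectSum.decompose 𝒜 y c : R) := by
        nth_rewrite 1 [← hsum]
        rw [← Finset.add_sum_erase _ _ h0]
        exact add_sub_cancel_left _ _
      rw [this]
      refine Ideal.sum_mem _ fun c hc => ?_
      exact hmem_plus c (Finset.ne_of_mem_erase hc) _ (SetLike.coe_mem _)
    · have hy0 : (DirectSum.decompose 𝒜 y 0 : R) = 0 := by
        have := DFinsupp.notMem_support_iff.mp h0
        rw [this]; rfl
      rw [hy0, sub_zero, ← hsum]
      refine Ideal.sum_mem _ fun c hc => ?_
      have hc0 : c ≠ 0 := fun h => h0 (h ▸ hc)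
      exact hmem_plus c hc0 _ (SetLike.coe_mem _)
  -- the projective data
  obtain ⟨m, b, s, p, hps, hs, hp⟩ := hPproj
  have hpsx : ∀ x : P, p (s x) = x := fun x => LinearMap.congr_fun hps x
  -- the truncation operator
  set ρ : P → P := fun x => p (fun i => (DirectSum.decompose 𝒜 (s x i) 0 : R)) with hρdef
  have hρ_apply : ∀ x, ρ x = p (fun i => (DirectSum.decompose 𝒜 (s x i) 0 : R)) :=
    fun _ => rfl
  have hρ_add : ∀ x y, ρ (x + y) = ρ x + ρ y := by
    intro x y
    have h : (fun i => (DirectSum.decompose 𝒜 (s (x + y) i) 0 : R)) =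
        (fun i => (DirectSum.decompose 𝒜 (s x i) 0 : R)) +
        (fun i => (DirectSum.decompose 𝒜 (s y i) 0 : R)) := by
      funext i
      rw [map_add s, Pi.add_apply, DirectSum.decompose_add, DirectSum.add_apply,
        AddSubgroup.coe_add]
      rfl
    rw [hρ_apply, hρ_apply, hρ_apply, h, map_add]
  have hρ_N : ∀ x ∈ Rplus • (⊤ : Submodule R P), ρ x = 0 := by
    intro x hx
    refine Submodule.smul_induction_on hx ?_ ?_
    · intro r hr z _
      have h : (fun i => (DirectSum.decompose 𝒜 (s (r • z) i) 0 : R)) = 0 := by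
        funext i
        rw [map_smul s]
        have h1 : (r • s z) i = r * s z i := rfl
        rw [h1]
        exact keyB r (s z i) (Or.inl (keyRplus r hr))
      rw [hρ_apply, h, map_zero]
    · intro x y hx hy
      rw [hρ_add, hx, hy, add_zero]
  have hvec : ∀ v : Fin m → R, (∀ i, v i ∈ Rplus) → p v ∈ Rplus • (⊤ : Submodule R P) := by
    intro v hv
    rw [pi_eq_sum_univ v, map_sum]
    refine Submodule.sum_mem _ fun i _ => ?_
    rw [map_smul]
    exact Submodule.smul_mem_smul (hv i) trivial
  have hρ_sub : ∀ x, x - ρ x ∈ Rplus • (⊤ : Submodule R P) := by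
    intro x
    have hx' : x - ρ x = p ((s x) - fun i => (DirectSum.decompose 𝒜 (s x i) 0 : R)) := by
      rw [map_sub, hpsx, hρ_apply]
    rw [hx']
    refine hvec _ fun i => ?_
    exact key_sub (s x i)
  have hρ_Q : ∀ (a : Fin n → ℤ) (x : P), x ∈ 𝒬 a → ρ x ∈ 𝒬 a := by
    intro a x hx
    refine hp a _ fun i => ?_
    have hsx := hs a x hx i
    by_cases h : a - b i = 0
    · rw [h] at hsx ⊢
      rw [DirectSum.decompose_of_mem_same 𝒜 hsx]
      exact hsx
    · rw [DirectSum.decompose_of_mem_ne 𝒜 hsx h]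
      exact zero_mem _
  have hρ_smul0 : ∀ r ∈ 𝒜 0, ∀ x, ρ (r • x) = r • ρ x := by
    intro r hr x
    have h : (fun i => (DirectSum.decompose 𝒜 (s (r • x) i) 0 : R)) =
        r • fun i => (DirectSum.decompose 𝒜 (s x i) 0 : R) := by
      funext i
      rw [map_smul s]
      have h1 : (r • s x) i = r * s x i := rfl
      rw [h1, keyC r hr]
      rfl
    rw [hρ_apply, hρ_apply, h, map_smul]
  -- π facts
  have hπs : Function.Surjective π := by
    rw [hπ]; exact Submodule.mkQ_surjective _
  have hπker : ∀ x, π x = 0 ↔ x ∈ Rplus • (⊤ : Submodule R P) := by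
    intro x
    rw [hπ, Submodule.mkQ_apply, Submodule.Quotient.mk_eq_zero]
  have hπρ : ∀ x, π (ρ x) = π x := by
    intro x
    have h := (hπker (x - ρ x)).mpr (hρ_sub x)
    rw [map_sub, sub_eq_zero] at h
    exact h.symm
  -- the splitting σ
  set σ₀ : (P ⧸ (Rplus • (⊤ : Submodule R P))) → P :=
    fun t => ρ (Function.surjInv hπs t) with hσ₀def
  have hσ₀π : ∀ x, σ₀ (π x) = ρ x := by
    intro x
    set y := Function.surjInv hπs (π x) with hy
    have hyx : π y = π x := Function.surjInv_eq hπs (π x)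
    have hmem : y - x ∈ Rplus • (⊤ : Submodule R P) := by
      rw [← hπker, map_sub, hyx, sub_self]
    have h1 : ρ (y - x) = 0 := hρ_N _ hmem
    have h2 : ρ ((y - x) + x) = ρ (y - x) + ρ x := hρ_add _ _
    rw [sub_add_cancel] at h2
    rw [hσ₀def]
    show ρ y = ρ x
    rw [h2, h1, zero_add]
  have hσ₀add : ∀ t u, σ₀ (t + u) = σ₀ t + σ₀ u := by
    intro t u
    obtain ⟨x, rfl⟩ := hπs t
    obtain ⟨y, rfl⟩ := hπs u
    rw [← map_add, hσ₀π, hσ₀π, hσ₀π, hρ_add]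
  set σ : (P ⧸ (Rplus • (⊤ : Submodule R P))) →+ P := AddMonoidHom.mk' σ₀ hσ₀add with hσdef
  have hσπ : ∀ x, σ (π x) = ρ x := hσ₀π
  have hπσ : ∀ t, π (σ t) = t := by
    intro t
    obtain ⟨x, rfl⟩ := hπs t
    rw [hσπ, hπρ]
  have hσ_smul : ∀ r ∈ 𝒜 0, ∀ t, σ (r • t) = r • σ t := by
    intro r hr t
    obtain ⟨x, rfl⟩ := hπs t
    rw [← map_smul, hσπ, hσπ, hρ_smul0 r hr]
  have hσ_Q : ∀ (a : Fin n → ℤ) (x : P), x ∈ 𝒬 a → σ (π x) ∈ 𝒬 a := by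
    intro a x hx
    rw [hσπ]
    exact hρ_Q a x hx
  -- Part 1 : internal direct sum
  have part1 : DirectSum.IsInternal fun a : Fin n → ℤ => (𝒬 a).map π.toAddMonoidHom :=
    isInternal_map_of_section 𝒬 π.toAddMonoidHom σ hPinternal hπs hπσ
      (fun a x hx => hσ_Q a x hx)
  refine ⟨part1, ?_, ⟨σ, hπσ, hσ_smul, hσ_Q⟩⟩
  -- Part 2 : finite and projective over R₀
  letI : Module ↥(𝒜 0) (P ⧸ (Rplus • (⊤ : Submodule R P))) :=
    gradeZeroModule 𝒜 (P ⧸ (Rplus • (⊤ : Submodule R P)))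
  set v : (Fin m → ↥(𝒜 0)) → (Fin m → R) := fun y i => (y i : R) with hvdef
  set pbar : (Fin m → ↥(𝒜 0)) →ₗ[↥(𝒜 0)] (P ⧸ (Rplus • (⊤ : Submodule R P))) :=
    { toFun := fun y => π (p (v y))
      map_add' := fun y z => by
        show π (p (v (y + z))) = π (p (v y)) + π (p (v z))
        have h : v (y + z) = v y + v z := rfl
        rw [h, map_add, map_add]
      map_smul' := fun r y => by
        show π (p (v (r • y))) = r • π (p (v y))
        have h : v (r • y) = (↑r : R) • v y := rfl
        rw [h, map_smul, map_smul]
        rfl } with hpbardef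
  set Sbar : (P ⧸ (Rplus • (⊤ : Submodule R P))) →ₗ[↥(𝒜 0)] (Fin m → ↥(𝒜 0)) :=
    { toFun := fun t i => ⟨(DirectSum.decompose 𝒜 (s (σ t) i) 0 : R), SetLike.coe_mem _⟩
      map_add' := fun t u => by
        funext i
        apply Subtype.ext
        show (DirectSum.decompose 𝒜 (s (σ (t + u)) i) 0 : R) =
          (DirectSum.decompose 𝒜 (s (σ t) i) 0 : R) +
          (DirectSum.decompose 𝒜 (s (σ u) i) 0 : R)
        rw [map_add σ, map_add s, Pi.add_apply, DirectSum.decompose_add,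
          DirectSum.add_apply, AddSubgroup.coe_add]
      map_smul' := fun r t => by
        funext i
        apply Subtype.ext
        show (DirectSum.decompose 𝒜 (s (σ (r • t)) i) 0 : R) =
          (↑r : R) * (DirectSum.decompose 𝒜 (s (σ t) i) 0 : R)
        have h1 : (r • t) = (↑r : R) • t := rfl
        rw [h1, hσ_smul ↑r r.2, map_smul s]
        have h2 : ((↑r : R) • s (σ t)) i = ↑r * s (σ t) i := rfl
        rw [h2, keyC ↑r r.2] } with hSbardef
  have hretr : ∀ t, pbar (Sbar t) = t := by
    intro t
    have h : pbar (Sbar t) = π (ρ (σ t)) := rfl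
    rw [h, hπρ, hπσ]
  constructor
  · exact Module.Finite.of_surjective pbar (fun t => ⟨Sbar t, hretr t⟩)
  · exact Module.Projective.of_split Sbar pbar (LinearMap.ext hretr)
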